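/- arXiv:1010.4212 — 2 statements merged into one kernel-verified Lean document; each statement's English description precedes it below -/
import Mathlib

section
/- Let M be a countable Urysohn space with finite distance set D, let l ≤ m, let E_l ⊆ E_m be finite subsets of M, and for i < s let t_i ⊆ s_i be Katětov functions with dom(t_i) = E_l, dom(s_i) = E_m, and d(t_i, t_j) = d(s_i, s_j) for all i, j. Then there exists an isometric embedding α of M into M fixing E_l pointwise such that α(x) ∈ orb(s_i) for every x ∈ orb(t_i) and every i < s. -/
namespace Sauer

def IsMetricTriple (a b c : ℝ) : Prop := a ≤ b + c ∧ b ≤ a + c ∧ c ≤ a + b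

def IsUniversalDist (D : Set ℝ) : Prop :=
  D.Finite ∧ (0 : ℝ) ∈ D ∧ (∀ d ∈ D, 0 ≤ d) ∧
    ∀ s x₀ y₀ x₁ y₁ : ℝ, s ∈ D → x₀ ∈ D → y₀ ∈ D → x₁ ∈ D → y₁ ∈ D →
      0 < x₀ → 0 < y₀ → 0 < x₁ → 0 < y₁ →
      IsMetricTriple x₀ y₀ s → IsMetricTriple x₁ y₁ s →
      ∃ t ∈ D, 0 < t ∧ IsMetricTriple x₀ x₁ t ∧ IsMetricTriple y₀ y₁ t

open Classical in
noncomputable def dsucc (D : Set ℝ) (r : ℝ) : ℝ :=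
  if ({s | s ∈ D ∧ r < s}).Nonempty then sInf {s | s ∈ D ∧ r < s} else r

noncomputable def dpred (D : Set ℝ) (r : ℝ) : ℝ := sSup {s | s ∈ D ∧ s < r}

def IsBlock (D B : Set ℝ) : Prop :=
  ∃ (n : ℕ) (b : ℕ → ℝ),
    B = {x | ∃ i, i ≤ n ∧ x = b i} ∧
    (∀ i ≤ n, b i ∈ D) ∧ 0 < b 0 ∧
    (∀ i < n, b i < b (i + 1)) ∧
    (∀ y ∈ D, y < b 0 → 2 * y < b 0) ∧
    (∀ i < n, b (i + 1) = dsucc D (b i)) ∧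
    (∀ i < n, b (i + 1) ≤ b i + b 0)

def IsJump (D : Set ℝ) (r : ℝ) : Prop := r ∈ D ∧ ∀ s ∈ D, r < s → 2 * r < s

structure Katetov (D : Set ℝ) (M : Type) [MetricSpace M] where
  dom : Finset M
  f : M → ℝ
  mem : ∀ x ∈ dom, f x ∈ D
  pos : ∀ x ∈ dom, 0 < f x
  ineq1 : ∀ x ∈ dom, ∀ y ∈ dom, |f x - f y| ≤ dist x y
  ineq2 : ∀ x ∈ dom, ∀ y ∈ dom, dist x y ≤ f x + f y

variable {D : Set ℝ} {M : Type} [MetricSpace M]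

def orb (t : Katetov D M) : Set M :=
  {y | y ∉ t.dom ∧ ∀ x ∈ t.dom, dist y x = t.f x}

noncomputable def rank (t : Katetov D M) : ℝ := sInf (t.f '' ↑t.dom)

def orbDistSet (s t : Katetov D M) : Set ℝ :=
  {m | ∃ x ∈ orb s, ∃ y ∈ orb t, dist x y = m}

noncomputable def dminK (s t : Katetov D M) : ℝ := sInf (orbDistSet s t)

noncomputable def dmin (A B : Set M) : ℝ := sInf {d | ∃ x ∈ A, ∃ y ∈ B, dist x y = d}

def IsHomogeneous (M : Type) [MetricSpace M] : Prop :=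
  ∀ (A : Finset M) (f : M → M),
    (∀ x ∈ A, ∀ y ∈ A, dist (f x) (f y) = dist x y) →
    ∃ g : M ≃ᵢ M, ∀ x ∈ A, g x = f x

def IsUrysohn (D : Set ℝ) (M : Type) [MetricSpace M] : Prop :=
  Countable M ∧ (∀ x y : M, dist x y ∈ D) ∧ IsHomogeneous M ∧
    ∀ (N : Type) [MetricSpace N], Finite N → (∀ x y : N, dist x y ∈ D) →
      ∃ f : N → M, Isometry f

/- ===================== auxiliary development ===================== -/

theorem IsMetricTriple.swap12 {a b c : ℝ} (h : IsMetricTriple a b c) : IsMetricTriple b a c := by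
  obtain ⟨h1, h2, h3⟩ := h; exact ⟨h2, h1, by linarith⟩

theorem IsMetricTriple.swap23 {a b c : ℝ} (h : IsMetricTriple a b c) : IsMetricTriple a c b := by
  obtain ⟨h1, h2, h3⟩ := h; exact ⟨by linarith, h3, h2⟩

theorem IsMetricTriple.swap13 {a b c : ℝ} (h : IsMetricTriple a b c) : IsMetricTriple c b a :=
  h.swap12.swap23.swap12

theorem triple_zero {a : ℝ} (h : 0 ≤ a) : IsMetricTriple a a 0 :=
  ⟨by linarith, by linarith, by linarith⟩

theorem triple_dist (x y z : M) : IsMetricTriple (dist x z) (dist y z) (dist x y) := by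
  refine ⟨?_, ?_, ?_⟩
  · calc dist x z ≤ dist x y + dist y z := dist_triangle x y z
      _ = dist y z + dist x y := by ring
  · calc dist y z ≤ dist y x + dist x z := dist_triangle y x z
      _ = dist x z + dist x y := by rw [dist_comm y x]; ring
  · calc dist x y ≤ dist x z + dist z y := dist_triangle x z y
      _ = dist x z + dist y z := by rw [dist_comm z y]

theorem katetov_triple (q : Katetov D M) {z w : M} (hz : z ∈ q.dom) (hw : w ∈ q.dom) :
    IsMetricTriple (dist z w) (q.f w) (q.f z) := by
  have h1 := q.ineq1 z hz w hw
  have h2 := q.ineq2 z hz w hw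
  rw [abs_sub_le_iff] at h1
  exact ⟨by linarith [h1.1], by linarith [h1.1], by linarith [h1.2]⟩

theorem orb_triple {s : ℕ} {t σ : Fin s → Katetov D M} {Em : Finset M}
    (hdoms : ∀ i, (σ i).dom = Em)
    (hd : ∀ i j, orbDistSet (t i) (t j) = orbDistSet (σ i) (σ j))
    {i j : Fin s} {a b : M} (ha : a ∈ orb (t i)) (hb : b ∈ orb (t j))
    {z : M} (hz : z ∈ Em) :
    IsMetricTriple ((σ i).f z) ((σ j).f z) (dist a b) := by
  have hm : dist a b ∈ orbDistSet (t i) (t j) := ⟨a, ha, b, hb, rfl⟩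
  rw [hd i j] at hm
  obtain ⟨a', ha', b', hb', he⟩ := hm
  have e1 : dist a' z = (σ i).f z := ha'.2 z (by rw [hdoms]; exact hz)
  have e2 : dist b' z = (σ j).f z := hb'.2 z (by rw [hdoms]; exact hz)
  rw [← e1, ← e2, ← he]
  exact triple_dist a' b' z

theorem sigma_eq {s : ℕ} {t σ : Fin s → Katetov D M} {Em : Finset M}
    (hdoms : ∀ i, (σ i).dom = Em)
    (hd : ∀ i j, orbDistSet (t i) (t j) = orbDistSet (σ i) (σ j))
    {i j : Fin s} {y : M} (hyi : y ∈ orb (t i)) (hyj : y ∈ orb (t j))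
    {z : M} (hz : z ∈ Em) : (σ i).f z = (σ j).f z := by
  have h0 : (0 : ℝ) ∈ orbDistSet (t i) (t j) := ⟨y, hyi, y, hyj, dist_self y⟩
  rw [hd i j] at h0
  obtain ⟨a, ha, b, hb, he⟩ := h0
  have hab : a = b := by rwa [dist_eq_zero] at he
  rw [← ha.2 z (by rw [hdoms]; exact hz), ← hb.2 z (by rw [hdoms]; exact hz), hab]

/-- The finite one-point-extension model. -/
abbrev ExtSpace (q : Katetov D M) : Type := Option {x // x ∈ q.dom}

noncomputable def esDist (q : Katetov D M) : ExtSpace q → ExtSpace q → ℝ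
  | some a, some b => dist a.1 b.1
  | some a, none => q.f a.1
  | none, some b => q.f b.1
  | none, none => 0

noncomputable instance esMetric (q : Katetov D M) : MetricSpace (ExtSpace q) where
  dist := esDist q
  dist_self := by
    rintro (_ | a)
    · rfl
    · exact dist_self a.1
  dist_comm := by
    rintro (_ | a) (_ | b)
    · rfl
    · rfl
    · rfl
    · exact dist_comm a.1 b.1
  dist_triangle := by
    rintro (_ | a) (_ | b) (_ | c)
    · show (0:ℝ) ≤ 0 + 0; norm_num
    · show q.f c.1 ≤ 0 + q.f c.1; norm_num
    · show (0:ℝ) ≤ q.f b.1 + q.f b.1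
      have := q.pos b.1 b.2; linarith
    · show q.f c.1 ≤ q.f b.1 + dist b.1 c.1
      have := q.ineq1 b.1 b.2 c.1 c.2
      rw [abs_sub_le_iff] at this
      linarith [this.2]
    · show q.f a.1 ≤ q.f a.1 + 0; norm_num
    · show dist a.1 c.1 ≤ q.f a.1 + q.f c.1
      exact q.ineq2 a.1 a.2 c.1 c.2
    · show q.f a.1 ≤ dist a.1 b.1 + q.f b.1
      have := q.ineq1 a.1 a.2 b.1 b.2
      rw [abs_sub_le_iff] at this
      linarith [this.1]
    · exact dist_triangle a.1 b.1 c.1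
  eq_of_dist_eq_zero := by
    rintro (_ | a) (_ | b) h
    · rfl
    · exact absurd h.symm (ne_of_lt (q.pos b.1 b.2))
    · exact absurd h.symm (ne_of_lt (q.pos a.1 a.2))
    · exact congrArg some (Subtype.ext (by exact dist_eq_zero.mp h))

/-- Realization lemma: every Katetov function over a finite subset of a Urysohn space
is realized by a point. -/
theorem realize [Nonempty M] (hD0 : (0:ℝ) ∈ D) (hM : IsUrysohn D M) (q : Katetov D M) :
    ∃ y, y ∈ orb q := by
  classical
  obtain ⟨hcount, hdist, hhom, hemb⟩ := hM
  have hDd : ∀ x y : ExtSpace q, dist x y ∈ D := by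
    rintro (_ | a) (_ | b)
    · exact hD0
    · exact q.mem b.1 b.2
    · exact q.mem a.1 a.2
    · exact hdist a.1 b.1
  obtain ⟨emb, hiso⟩ := hemb (ExtSpace q) inferInstance hDd
  have hinj : Function.Injective emb := hiso.injective
  have hde : ∀ x y : ExtSpace q, dist (emb x) (emb y) = esDist q x y := fun x y =>
    hiso.dist_eq x y
  set A : Finset M := q.dom.attach.image (fun b => emb (some b)) with hA
  set j : M → M := fun y =>
    if h : ∃ b : {x // x ∈ q.dom}, emb (some b) = y then (h.choose).1 else y with hj
  have hjval : ∀ b : {x // x ∈ q.dom}, j (emb (some b)) = b.1 := by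
    intro b
    have hex : ∃ b' : {x // x ∈ q.dom}, emb (some b') = emb (some b) := ⟨b, rfl⟩
    have h2 : hex.choose = b := Option.some.inj (hinj hex.choose_spec)
    simp only [hj]
    rw [dif_pos hex, h2]
  have hjA : ∀ y ∈ A, ∀ y' ∈ A, dist (j y) (j y') = dist y y' := by
    intro y hy y' hy'
    obtain ⟨b, -, rfl⟩ := Finset.mem_image.mp hy
    obtain ⟨b', -, rfl⟩ := Finset.mem_image.mp hy'
    rw [hjval b, hjval b', hde (some b) (some b')]
    rfl
  obtain ⟨g, hg⟩ := hhom A j hjA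
  have key : ∀ z ∈ q.dom, dist (g (emb none)) z = q.f z := by
    intro z hz
    have hmem : emb (some ⟨z, hz⟩) ∈ A :=
      Finset.mem_image.mpr ⟨⟨z, hz⟩, Finset.mem_attach _ _, rfl⟩
    have h1 : g (emb (some ⟨z, hz⟩)) = z := by rw [hg _ hmem, hjval]
    calc dist (g (emb none)) z = dist (g (emb none)) (g (emb (some ⟨z, hz⟩))) := by rw [h1]
      _ = dist (emb none) (emb (some ⟨z, hz⟩)) := g.dist_eq _ _
      _ = q.f z := by rw [hde]; rfl
  refine ⟨g (emb none), fun hmem => ?_, key⟩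
  have h := key _ hmem
  rw [dist_self] at h
  exact (q.pos _ hmem).ne' h.symm

/-- Helly-style lemma: a finite family of pairwise-compatible constraints on a new
distance value can be simultaneously satisfied by an element of `D`. -/
theorem helly (hD : IsUniversalDist D) (C : Finset (ℝ × ℝ)) (hC : C.Nonempty)
    (hmem : ∀ c ∈ C, c.1 ∈ D ∧ 0 < c.1 ∧ c.2 ∈ D ∧ 0 < c.2)
    (hpair : ∀ c ∈ C, ∀ c' ∈ C, ∃ u ∈ D, IsMetricTriple c.1 c'.1 u ∧ IsMetricTriple c.2 c'.2 u) :
    ∃ v ∈ D, 0 < v ∧ ∀ c ∈ C, IsMetricTriple c.1 c.2 v := by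
  obtain ⟨c₀, hc₀, hmax⟩ := Finset.exists_max_image C (fun c => |c.1 - c.2|) hC
  obtain ⟨c₁, hc₁, hmin⟩ := Finset.exists_min_image C (fun c => c.1 + c.2) hC
  obtain ⟨u, hu, h1, h2⟩ := hpair c₀ hc₀ c₁ hc₁
  obtain ⟨m0a, p0a, m0b, p0b⟩ := hmem c₀ hc₀
  obtain ⟨m1a, p1a, m1b, p1b⟩ := hmem c₁ hc₁
  obtain ⟨v, hv, hvpos, hva, hvb⟩ :=
    hD.2.2.2 u c₀.1 c₁.1 c₀.2 c₁.2 hu m0a m1a m0b m1b p0a p1a p0b p1b h1 h2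
  refine ⟨v, hv, hvpos, fun c hc => ?_⟩
  have h0 : |c₀.1 - c₀.2| ≤ v := abs_sub_le_iff.mpr ⟨by linarith [hva.1], by linarith [hva.2.1]⟩
  have hL : |c.1 - c.2| ≤ v := (hmax c hc).trans h0
  have hU : v ≤ c.1 + c.2 := hvb.2.2.trans (hmin c hc)
  rw [abs_sub_le_iff] at hL
  exact ⟨by linarith [hL.1], by linarith [hL.2], hU⟩

/-- The invariant carried along the recursion. -/
structure GoodMap (El Em : Finset M) {s : ℕ} (t σ : Fin s → Katetov D M)
    (ι : M → ℕ) (n : ℕ) (f : M → M) : Prop where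
  fixes : ∀ x ∈ El, f x = x
  isom : ∀ x y, (x ∈ El ∨ ι x < n) → (y ∈ El ∨ ι y < n) → dist (f x) (f y) = dist x y
  notEm : ∀ x, (x ∈ El ∨ ι x < n) → x ∉ El → f x ∉ Em
  inOrb : ∀ x, (x ∈ El ∨ ι x < n) → ∀ i, x ∈ orb (t i) → f x ∈ orb (σ i)
  compat : ∀ u, (u ∈ El ∨ ι u < n) → u ∉ El → ∀ i, ∀ y ∈ orb (t i), ∀ z ∈ Em,
      IsMetricTriple ((σ i).f z) (dist (f u) z) (dist y u)

/-- Katetov data for a "free" new point, extended over `Em` one point at a time. -/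
theorem free_ext [DecidableEq M] (hD : IsUniversalDist D) (hM : IsUrysohn D M)
    {El Em : Finset M} (hsub : El ⊆ Em) {s : ℕ} (hs : 0 < s)
    {t σ : Fin s → Katetov D M}
    (hdomt : ∀ i, (t i).dom = El) (hdoms : ∀ i, (σ i).dom = Em)
    (hext : ∀ i, ∀ x ∈ El, (σ i).f x = (t i).f x)
    (hd : ∀ i j, orbDistSet (t i) (t j) = orbDistSet (σ i) (σ j))
    {ι : M → ℕ} (hι : Function.Injective ι) {n : ℕ} {f : M → M}
    (hf : GoodMap El Em t σ ι n f) {x : M} (hxEl : x ∉ El) (hxn : ι x = n)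
    (hxfree : ∀ i, x ∉ orb (t i)) :
    ∀ B : Finset M, B ⊆ Em \ El →
      ∃ p : M → ℝ,
        (∀ z ∈ El ∪ B, p z ∈ D ∧ 0 < p z) ∧
        (∀ z ∈ El, p z = dist x z) ∧
        (∀ z ∈ El ∪ B, ∀ z' ∈ El ∪ B, IsMetricTriple (p z) (p z') (dist z z')) ∧
        (∀ u, ι u < n → u ∉ El → ∀ z ∈ El ∪ B, IsMetricTriple (p z) (dist (f u) z) (dist x u)) ∧
        (∀ i : Fin s, ∀ y ∈ orb (t i), ∀ z ∈ El ∪ B,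
          IsMetricTriple (p z) ((σ i).f z) (dist y x)) := by
  classical
  intro B
  induction B using Finset.induction_on with
  | empty =>
      intro _
      rw [Finset.union_empty]
      refine ⟨fun z => dist x z, ?_, fun z _ => rfl, ?_, ?_, ?_⟩
      · intro z hz
        exact ⟨hM.2.1 x z, dist_pos.mpr (by rintro rfl; exact hxEl hz)⟩
      · intro z hz z' hz'
        have h := triple_dist z z' x
        rwa [dist_comm z x, dist_comm z' x] at h
      · intro u hu huEl z hz
        have hfz : dist (f u) z = dist u z := by
          have h := hf.isom u z (Or.inr hu) (Or.inl hz)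
          rwa [hf.fixes z hz] at h
        rw [hfz]
        exact triple_dist x u z
      · intro i y hy z hz
        have h1 : (σ i).f z = dist y z := by
          rw [hext i z hz, ← hy.2 z (by rw [hdomt]; exact hz)]
        rw [h1]
        have h := triple_dist x y z
        rwa [dist_comm x y] at h
  | @insert w B hwB ih =>
      intro hsubB
      have hB : B ⊆ Em \ El := (Finset.subset_insert w B).trans hsubB
      obtain ⟨p, hQ1, hQ2, hQ3, hQ4, hQ5⟩ := ih hB
      have hwmem := Finset.mem_sdiff.mp (hsubB (Finset.mem_insert_self w B))
      have hwEm : w ∈ Em := hwmem.1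
      have hwEl : w ∉ El := hwmem.2
      have hwd : w ∈ (σ (⟨0, hs⟩ : Fin s)).dom := by rw [hdoms]; exact hwEm
      set A : Finset M := El ∪ B with hA
      have hwA : w ∉ A := by
        intro h
        rcases Finset.mem_union.mp h with h | h
        · exact hwEl h
        · exact hwB h
      have hAEm : ∀ z ∈ A, z ∈ Em := by
        intro z hz
        rcases Finset.mem_union.mp hz with h | h
        · exact hsub h
        · exact (Finset.mem_sdiff.mp (hB h)).1
      -- the three families of constraints
      set SU : Finset M := ((Finset.range n).preimage ι hι.injOn).filter (fun u => u ∉ El)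
        with hSU
      have hSUmem : ∀ u, u ∈ SU ↔ ι u < n ∧ u ∉ El := by
        intro u
        simp [hSU, Finset.mem_filter, Finset.mem_preimage, Finset.mem_range]
      set C₁ : Finset (ℝ × ℝ) := A.image (fun z => (p z, dist z w)) with hC₁
      set C₂ : Finset (ℝ × ℝ) := SU.image (fun u => (dist x u, dist (f u) w)) with hC₂
      set C₃ : Finset (ℝ × ℝ) :=
        (((Finset.univ : Finset (Fin s)) ×ˢ hD.1.toFinset).filter
          (fun c => ∃ y ∈ orb (t c.1), dist y x = c.2)).image
          (fun c => (c.2, (σ c.1).f w)) with hC₃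
      set C : Finset (ℝ × ℝ) := C₁ ∪ C₂ ∪ C₃ with hC
      have hmC1 : ∀ z ∈ A, (p z, dist z w) ∈ C := by
        intro z hz
        exact Finset.mem_union_left _ (Finset.mem_union_left _ (Finset.mem_image_of_mem _ hz))
      have hmC2 : ∀ u, ι u < n → u ∉ El → (dist x u, dist (f u) w) ∈ C := by
        intro u h1 h2
        exact Finset.mem_union_left _
          (Finset.mem_union_right _ (Finset.mem_image_of_mem _ ((hSUmem u).mpr ⟨h1, h2⟩)))
      have hmC3 : ∀ i : Fin s, ∀ y ∈ orb (t i), (dist y x, (σ i).f w) ∈ C := by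
        intro i y hy
        refine Finset.mem_union_right _ (Finset.mem_image.mpr ⟨(i, dist y x), ?_, rfl⟩)
        refine Finset.mem_filter.mpr ⟨Finset.mem_product.mpr ⟨Finset.mem_univ i, ?_⟩, y, hy, rfl⟩
        exact hD.1.mem_toFinset.mpr (hM.2.1 y x)
      -- extraction lemmas
      have hC1e : ∀ c ∈ C₁, ∃ z, z ∈ A ∧ c = (p z, dist z w) := by
        intro c hc
        obtain ⟨z, hz, rfl⟩ := Finset.mem_image.mp hc
        exact ⟨z, hz, rfl⟩
      have hC2e : ∀ c ∈ C₂, ∃ u, ι u < n ∧ u ∉ El ∧ c = (dist x u, dist (f u) w) := by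
        intro c hc
        obtain ⟨u, hu, rfl⟩ := Finset.mem_image.mp hc
        obtain ⟨h1, h2⟩ := (hSUmem u).mp hu
        exact ⟨u, h1, h2, rfl⟩
      have hC3e : ∀ c ∈ C₃, ∃ (i : Fin s) (y : M), y ∈ orb (t i) ∧ c = (dist y x, (σ i).f w) := by
        intro c hc
        obtain ⟨⟨i, d⟩, hmemf, rfl⟩ := Finset.mem_image.mp hc
        obtain ⟨-, y, hy, hyd⟩ := Finset.mem_filter.mp hmemf
        exact ⟨i, y, hy, by subst hyd; rfl⟩
      -- membership/positivity facts
      have hmem : ∀ c ∈ C, c.1 ∈ D ∧ 0 < c.1 ∧ c.2 ∈ D ∧ 0 < c.2 := by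
        intro c hc
        rcases Finset.mem_union.mp hc with hc12 | hc3
        · rcases Finset.mem_union.mp hc12 with hc1 | hc2
          · obtain ⟨z, hz, rfl⟩ := hC1e c hc1
            refine ⟨(hQ1 z hz).1, (hQ1 z hz).2, hM.2.1 z w, dist_pos.mpr ?_⟩
            rintro rfl
            exact hwA hz
          · obtain ⟨u, h1, h2, rfl⟩ := hC2e c hc2
            refine ⟨hM.2.1 x u, dist_pos.mpr ?_, hM.2.1 (f u) w, dist_pos.mpr ?_⟩
            · rintro rfl
              omega
            · intro he
              exact hf.notEm u (Or.inr h1) h2 (he ▸ hwEm)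
        · obtain ⟨i, y, hy, rfl⟩ := hC3e c hc3
          have hwdi : w ∈ (σ i).dom := by rw [hdoms]; exact hwEm
          refine ⟨hM.2.1 y x, dist_pos.mpr ?_, (σ i).mem w hwdi, (σ i).pos w hwdi⟩
          rintro rfl
          exact hxfree i hy
      -- pairwise compatibility
      have hpair : ∀ c ∈ C, ∀ c' ∈ C,
          ∃ u ∈ D, IsMetricTriple c.1 c'.1 u ∧ IsMetricTriple c.2 c'.2 u := by
        have case11 : ∀ z ∈ A, ∀ z' ∈ A,
            ∃ u ∈ D, IsMetricTriple (p z) (p z') u ∧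
              IsMetricTriple (dist z w) (dist z' w) u :=
          fun z hz z' hz' => ⟨dist z z', hM.2.1 z z', hQ3 z hz z' hz', triple_dist z z' w⟩
        have case12 : ∀ z ∈ A, ∀ u, ι u < n → u ∉ El →
            ∃ v ∈ D, IsMetricTriple (p z) (dist x u) v ∧
              IsMetricTriple (dist z w) (dist (f u) w) v := by
          intro z hz u h1 h2
          refine ⟨dist z (f u), hM.2.1 z (f u), ?_, triple_dist z (f u) w⟩
          have h := (hQ4 u h1 h2 z hz).swap23
          rwa [dist_comm (f u) z] at h
        have case13 : ∀ z ∈ A, ∀ i : Fin s, ∀ y ∈ orb (t i),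
            ∃ v ∈ D, IsMetricTriple (p z) (dist y x) v ∧
              IsMetricTriple (dist z w) ((σ i).f w) v := by
          intro z hz i y hy
          have hzd : z ∈ (σ i).dom := by rw [hdoms]; exact hAEm z hz
          have hwdi : w ∈ (σ i).dom := by rw [hdoms]; exact hwEm
          exact ⟨(σ i).f z, (σ i).mem z hzd, (hQ5 i y hy z hz).swap23,
            katetov_triple (σ i) hzd hwdi⟩
        have case22 : ∀ u, ι u < n → u ∉ El → ∀ u', ι u' < n → u' ∉ El →
            ∃ v ∈ D, IsMetricTriple (dist x u) (dist x u') v ∧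
              IsMetricTriple (dist (f u) w) (dist (f u') w) v := by
          intro u h1 h2 u' h1' h2'
          refine ⟨dist u u', hM.2.1 u u', ?_, ?_⟩
          · have h := triple_dist u u' x
            rwa [dist_comm u x, dist_comm u' x] at h
          · have h := triple_dist (f u) (f u') w
            rwa [hf.isom u u' (Or.inr h1) (Or.inr h1')] at h
        have case23 : ∀ u, ι u < n → u ∉ El → ∀ i : Fin s, ∀ y ∈ orb (t i),
            ∃ v ∈ D, IsMetricTriple (dist x u) (dist y x) v ∧
              IsMetricTriple (dist (f u) w) ((σ i).f w) v := by
          intro u h1 h2 i y hy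
          refine ⟨dist y u, hM.2.1 y u, ?_, ?_⟩
          · have h := (triple_dist x y u).swap23
            rwa [dist_comm x y] at h
          · exact (hf.compat u (Or.inr h1) h2 i y hy w hwEm).swap12
        have case33 : ∀ i : Fin s, ∀ y ∈ orb (t i), ∀ j : Fin s, ∀ y' ∈ orb (t j),
            ∃ v ∈ D, IsMetricTriple (dist y x) (dist y' x) v ∧
              IsMetricTriple ((σ i).f w) ((σ j).f w) v := by
          intro i y hy j y' hy'
          exact ⟨dist y y', hM.2.1 y y', triple_dist y y' x, orb_triple hdoms hd hy hy' hwEm⟩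
        intro c hc c' hc'
        rcases Finset.mem_union.mp hc with hc12 | hc3
        · rcases Finset.mem_union.mp hc12 with hc1 | hc2
          · obtain ⟨z, hz, rfl⟩ := hC1e c hc1
            rcases Finset.mem_union.mp hc' with hc12' | hc3'
            · rcases Finset.mem_union.mp hc12' with hc1' | hc2'
              · obtain ⟨z', hz', rfl⟩ := hC1e c' hc1'
                exact case11 z hz z' hz'
              · obtain ⟨u, h1, h2, rfl⟩ := hC2e c' hc2'
                exact case12 z hz u h1 h2
            · obtain ⟨i, y, hy, rfl⟩ := hC3e c' hc3'
              exact case13 z hz i y hy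
          · obtain ⟨u, h1, h2, rfl⟩ := hC2e c hc2
            rcases Finset.mem_union.mp hc' with hc12' | hc3'
            · rcases Finset.mem_union.mp hc12' with hc1' | hc2'
              · obtain ⟨z, hz, rfl⟩ := hC1e c' hc1'
                obtain ⟨v, hv, ha, hb⟩ := case12 z hz u h1 h2
                exact ⟨v, hv, ha.swap12, hb.swap12⟩
              · obtain ⟨u', h1', h2', rfl⟩ := hC2e c' hc2'
                exact case22 u h1 h2 u' h1' h2'
            · obtain ⟨i, y, hy, rfl⟩ := hC3e c' hc3'
              exact case23 u h1 h2 i y hy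
        · obtain ⟨i, y, hy, rfl⟩ := hC3e c hc3
          rcases Finset.mem_union.mp hc' with hc12' | hc3'
          · rcases Finset.mem_union.mp hc12' with hc1' | hc2'
            · obtain ⟨z, hz, rfl⟩ := hC1e c' hc1'
              obtain ⟨v, hv, ha, hb⟩ := case13 z hz i y hy
              exact ⟨v, hv, ha.swap12, hb.swap12⟩
            · obtain ⟨u, h1, h2, rfl⟩ := hC2e c' hc2'
              obtain ⟨v, hv, ha, hb⟩ := case23 u h1 h2 i y hy
              exact ⟨v, hv, ha.swap12, hb.swap12⟩
          · obtain ⟨j, y', hy', rfl⟩ := hC3e c' hc3'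
            exact case33 i y hy j y' hy'
      -- choose the new value
      obtain ⟨v, hvD, hvpos, hvall⟩ :
          ∃ v ∈ D, 0 < v ∧ ∀ c ∈ C, IsMetricTriple c.1 c.2 v := by
        by_cases hCne : C.Nonempty
        · exact helly hD C hCne hmem hpair
        · exact ⟨(σ (⟨0, hs⟩ : Fin s)).f w, (σ _).mem w hwd, (σ _).pos w hwd,
            fun c hc => absurd ⟨c, hc⟩ hCne⟩
      have hins : El ∪ insert w B = insert w A := Finset.union_insert w El B
      rw [hins]
      refine ⟨Function.update p w v, ?_, ?_, ?_, ?_, ?_⟩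
      · intro z hz
        rcases Finset.mem_insert.mp hz with rfl | hzA
        · rw [Function.update_self]
          exact ⟨hvD, hvpos⟩
        · rw [Function.update_of_ne (by rintro rfl; exact hwA hzA)]
          exact hQ1 z hzA
      · intro z hz
        rw [Function.update_of_ne (by rintro rfl; exact hwEl hz)]
        exact hQ2 z hz
      · intro z hz z' hz'
        rcases Finset.mem_insert.mp hz with he | hzA <;>
          rcases Finset.mem_insert.mp hz' with he' | hz'A
        · rw [he, he', Function.update_self, dist_self]
          exact triple_zero hvpos.le
        · rw [he, Function.update_self,
            Function.update_of_ne (by rintro rfl; exact hwA hz'A)]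
          have h := ((hvall _ (hmC1 z' hz'A)).swap23).swap12
          rwa [dist_comm z' w] at h
        · rw [he', Function.update_self,
            Function.update_of_ne (by rintro rfl; exact hwA hzA)]
          exact (hvall _ (hmC1 z hzA)).swap23
        · rw [Function.update_of_ne (by rintro rfl; exact hwA hzA),
            Function.update_of_ne (by rintro rfl; exact hwA hz'A)]
          exact hQ3 z hzA z' hz'A
      · intro u h1 h2 z hz
        rcases Finset.mem_insert.mp hz with rfl | hzA
        · rw [Function.update_self]
          exact (hvall _ (hmC2 u h1 h2)).swap13
        · rw [Function.update_of_ne (by rintro rfl; exact hwA hzA)]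
          exact hQ4 u h1 h2 z hzA
      · intro i y hy z hz
        rcases Finset.mem_insert.mp hz with rfl | hzA
        · rw [Function.update_self]
          exact (hvall _ (hmC3 i y hy)).swap13
        · rw [Function.update_of_ne (by rintro rfl; exact hwA hzA)]
          exact hQ5 i y hy z hzA

/-- Realize the image of a new point: a point at prescribed distances (given by `p`) from
`Em` and at the correct distances from the images of previously processed points. -/
theorem step_realize [Nonempty M] (hD0 : (0:ℝ) ∈ D) (hM : IsUrysohn D M)
    {El Em : Finset M} {s : ℕ} {t σ : Fin s → Katetov D M}
    {ι : M → ℕ} (hι : Function.Injective ι) {n : ℕ} {f : M → M}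
    (hf : GoodMap El Em t σ ι n f) {x : M} (hxn : ι x = n)
    {p : M → ℝ}
    (hp1 : ∀ z ∈ Em, p z ∈ D ∧ 0 < p z)
    (hp3 : ∀ z ∈ Em, ∀ z' ∈ Em, IsMetricTriple (p z) (p z') (dist z z'))
    (hp4 : ∀ u, ι u < n → u ∉ El → ∀ z ∈ Em, IsMetricTriple (p z) (dist (f u) z) (dist x u)) :
    ∃ yh : M, (∀ z ∈ Em, dist yh z = p z) ∧
      (∀ u, ι u < n → u ∉ El → dist yh (f u) = dist x u) ∧ yh ∉ Em := by
  classical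
  set SU : Finset M := ((Finset.range n).preimage ι hι.injOn).filter (fun u => u ∉ El)
    with hSU
  have hSUmem : ∀ u, u ∈ SU ↔ ι u < n ∧ u ∉ El := by
    intro u
    simp [hSU, Finset.mem_filter, Finset.mem_preimage, Finset.mem_range]
  have hinjS : Set.InjOn f ↑SU := by
    intro u hu u' hu' he
    obtain ⟨h1, -⟩ := (hSUmem u).mp hu
    obtain ⟨h1', -⟩ := (hSUmem u').mp hu'
    have h := hf.isom u u' (Or.inr h1) (Or.inr h1')
    rw [he, dist_self] at h
    exact dist_eq_zero.mp h.symm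
  set kf : M → ℝ := fun y =>
    if y ∈ Em then p y else dist x (Function.invFunOn f ↑SU y) with hkf
  have hval1 : ∀ y ∈ Em, kf y = p y := by
    intro y hy
    simp only [hkf]
    rw [if_pos hy]
  have hkval : ∀ u ∈ SU, kf (f u) = dist x u ∧ f u ∉ Em := by
    intro u hu
    obtain ⟨h1, h2⟩ := (hSUmem u).mp hu
    have hfu : f u ∉ Em := hf.notEm u (Or.inr h1) h2
    have hex : ∃ a ∈ (↑SU : Set M), f a = f u := ⟨u, hu, rfl⟩
    have heq : Function.invFunOn f ↑SU (f u) = u :=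
      hinjS (Function.invFunOn_mem hex) hu (Function.invFunOn_eq hex)
    refine ⟨?_, hfu⟩
    simp only [hkf]
    rw [if_neg hfu, heq]
  set dm : Finset M := Em ∪ SU.image f with hdm
  have hmemcase : ∀ y ∈ dm, y ∈ Em ∨
      ∃ u, ι u < n ∧ u ∉ El ∧ y = f u ∧ kf y = dist x u ∧ y ∉ Em := by
    intro y hy
    rcases Finset.mem_union.mp hy with h | h
    · exact Or.inl h
    · obtain ⟨u, hu, rfl⟩ := Finset.mem_image.mp h
      obtain ⟨h1, h2⟩ := (hSUmem u).mp hu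
      exact Or.inr ⟨u, h1, h2, rfl, (hkval u hu).1, (hkval u hu).2⟩
  have hk1 : ∀ y ∈ dm, kf y ∈ D ∧ 0 < kf y := by
    intro y hy
    rcases hmemcase y hy with hyEm | ⟨u, h1, h2, rfl, he, -⟩
    · rw [hval1 y hyEm]
      exact hp1 y hyEm
    · rw [he]
      refine ⟨hM.2.1 x u, dist_pos.mpr ?_⟩
      rintro rfl
      omega
  have hki1 : ∀ a ∈ dm, ∀ b ∈ dm, |kf a - kf b| ≤ dist a b := by
    intro a ha b hb
    rcases hmemcase a ha with haEm | ⟨u, h1, h2, rfl, hea, hna⟩ <;>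
      rcases hmemcase b hb with hbEm | ⟨u', h1', h2', rfl, heb, hnb⟩
    · rw [hval1 a haEm, hval1 b hbEm, abs_sub_le_iff]
      have h := hp3 a haEm b hbEm
      exact ⟨by linarith [h.1], by linarith [h.2.1]⟩
    · rw [hval1 a haEm, heb, abs_sub_le_iff]
      have h := hp4 u' h1' h2' a haEm
      have hc : dist (f u') a = dist a (f u') := dist_comm _ _
      exact ⟨by linarith [h.1], by linarith [h.2.2]⟩
    · rw [hea, hval1 b hbEm, abs_sub_le_iff]
      have h := hp4 u h1 h2 b hbEm
      have hc : dist (f u) b = dist b (f u) := dist_comm _ _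
      exact ⟨by linarith [h.2.2], by linarith [h.1]⟩
    · rw [hea, heb, abs_sub_le_iff]
      have hdd : dist (f u) (f u') = dist u u' := hf.isom u u' (Or.inr h1) (Or.inr h1')
      rw [hdd]
      constructor
      · linarith [dist_triangle x u' u, dist_comm u' u]
      · linarith [dist_triangle x u u']
  have hki2 : ∀ a ∈ dm, ∀ b ∈ dm, dist a b ≤ kf a + kf b := by
    intro a ha b hb
    rcases hmemcase a ha with haEm | ⟨u, h1, h2, rfl, hea, hna⟩ <;>
      rcases hmemcase b hb with hbEm | ⟨u', h1', h2', rfl, heb, hnb⟩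
    · rw [hval1 a haEm, hval1 b hbEm]
      exact (hp3 a haEm b hbEm).2.2
    · rw [hval1 a haEm, heb]
      have h := hp4 u' h1' h2' a haEm
      linarith [h.2.1, dist_comm (f u') a]
    · rw [hea, hval1 b hbEm]
      have h := hp4 u h1 h2 b hbEm
      linarith [h.2.1, dist_comm (f u) b]
    · rw [hea, heb]
      have hdd : dist (f u) (f u') = dist u u' := hf.isom u u' (Or.inr h1) (Or.inr h1')
      rw [hdd]
      linarith [dist_triangle u x u', dist_comm u x]
  obtain ⟨yh, hyh1, hyh2⟩ := realize hD0 hM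
    ⟨dm, kf, fun y hy => (hk1 y hy).1, fun y hy => (hk1 y hy).2, hki1, hki2⟩
  refine ⟨yh, ?_, ?_, ?_⟩
  · intro z hz
    rw [hyh2 z (Finset.mem_union_left _ hz)]
    exact hval1 z hz
  · intro u h1 h2
    have hu : u ∈ SU := (hSUmem u).mpr ⟨h1, h2⟩
    rw [hyh2 (f u) (Finset.mem_union_right _ (Finset.mem_image_of_mem f hu))]
    exact (hkval u hu).1
  · exact fun h => hyh1 (Finset.mem_union_left _ h)

/-- One step of the recursion: extend a good partial map to rank `n+1`. -/
theorem key [Nonempty M] (hD : IsUniversalDist D) (hM : IsUrysohn D M)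
    {El Em : Finset M} (hsub : El ⊆ Em) {s : ℕ} (hs : 0 < s)
    {t σ : Fin s → Katetov D M}
    (hdomt : ∀ i, (t i).dom = El) (hdoms : ∀ i, (σ i).dom = Em)
    (hext : ∀ i, ∀ x ∈ El, (σ i).f x = (t i).f x)
    (hd : ∀ i j, orbDistSet (t i) (t j) = orbDistSet (σ i) (σ j))
    {ι : M → ℕ} (hι : Function.Injective ι) (n : ℕ) (f : M → M)
    (hf : GoodMap El Em t σ ι n f) :
    ∃ f' : M → M, GoodMap El Em t σ ι (n + 1) f' ∧
      ∀ y, (y ∈ El ∨ ι y < n) → f' y = f y := by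
  classical
  by_cases hx : ∃ x, ι x = n ∧ x ∉ El
  case neg =>
    refine ⟨f, ?_, fun y _ => rfl⟩
    push_neg at hx
    have hdm : ∀ y, (y ∈ El ∨ ι y < n + 1) → (y ∈ El ∨ ι y < n) := by
      intro y hy
      rcases hy with h | h
      · exact Or.inl h
      · rcases Nat.lt_succ_iff_lt_or_eq.mp h with h' | h'
        · exact Or.inr h'
        · exact Or.inl (hx y h')
    exact ⟨hf.fixes, fun a b ha hb => hf.isom a b (hdm a ha) (hdm b hb),
      fun a ha => hf.notEm a (hdm a ha), fun a ha => hf.inOrb a (hdm a ha),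
      fun a ha => hf.compat a (hdm a ha)⟩
  case pos =>
    obtain ⟨x, hxn, hxEl⟩ := hx
    obtain ⟨p, hK1, hK2, hK3, hK4, hK5, hK6⟩ :
        ∃ p : M → ℝ, (∀ z ∈ Em, p z ∈ D ∧ 0 < p z) ∧ (∀ z ∈ El, p z = dist x z) ∧
          (∀ z ∈ Em, ∀ z' ∈ Em, IsMetricTriple (p z) (p z') (dist z z')) ∧
          (∀ u, ι u < n → u ∉ El → ∀ z ∈ Em,
            IsMetricTriple (p z) (dist (f u) z) (dist x u)) ∧
          (∀ i : Fin s, ∀ y ∈ orb (t i), ∀ z ∈ Em,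
            IsMetricTriple (p z) ((σ i).f z) (dist y x)) ∧
          (∀ i : Fin s, x ∈ orb (t i) → ∀ z ∈ Em, p z = (σ i).f z) := by
      by_cases horb : ∃ i, x ∈ orb (t i)
      · obtain ⟨i₀, hi₀⟩ := horb
        refine ⟨(σ i₀).f, ?_, ?_, ?_, ?_, ?_, ?_⟩
        · intro z hz
          have hz' : z ∈ (σ i₀).dom := by rw [hdoms]; exact hz
          exact ⟨(σ i₀).mem z hz', (σ i₀).pos z hz'⟩
        · intro z hz
          rw [hext i₀ z hz, ← hi₀.2 z (by rw [hdomt]; exact hz), dist_comm]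
        · intro z hz z' hz'
          have hz1 : z ∈ (σ i₀).dom := by rw [hdoms]; exact hz
          have hz2 : z' ∈ (σ i₀).dom := by rw [hdoms]; exact hz'
          exact (katetov_triple (σ i₀) hz1 hz2).swap13
        · intro u hu huEl z hz
          exact hf.compat u (Or.inr hu) huEl i₀ x hi₀ z hz
        · intro i y hy z hz
          exact (orb_triple hdoms hd hy hi₀ hz).swap12
        · intro i hxi z hz
          exact (sigma_eq hdoms hd hi₀ hxi hz)
      · push_neg at horb
        obtain ⟨p, h1, h2, h3, h4, h5⟩ := free_ext hD hM hsub hs hdomt hdoms hext hd hι hf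
          hxEl hxn horb (Em \ El) Finset.Subset.rfl
        rw [Finset.union_sdiff_of_subset hsub] at h1 h3 h4 h5
        exact ⟨p, h1, h2, h3, h4, h5, fun i hxi => absurd hxi (horb i)⟩
    obtain ⟨yh, hS1, hS2, hS3⟩ := step_realize hD.2.1 hM hι hf hxn hK1 hK3 hK4
    set f' : M → M := fun y => if ι y = n then yh else f y with hf'
    have hold : ∀ y, (y ∈ El ∨ ι y < n) → f' y = f y := by
      intro y hy
      have hne : ι y ≠ n := by
        rcases hy with h | h
        · intro he
          have : y = x := hι (by rw [he, hxn])
          exact hxEl (this ▸ h)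
        · omega
      simp only [hf']
      rw [if_neg hne]
    have hxval : f' x = yh := by
      simp only [hf']
      rw [if_pos hxn]
    have hcase : ∀ y, (y ∈ El ∨ ι y < n + 1) → (y ∈ El ∨ ι y < n) ∨ y = x := by
      intro y hy
      rcases hy with h | h
      · exact Or.inl (Or.inl h)
      · rcases Nat.lt_succ_iff_lt_or_eq.mp h with h' | h'
        · exact Or.inl (Or.inr h')
        · exact Or.inr (hι (by rw [h', hxn]))
    -- distance from the new image to old images
    have hnew : ∀ u, (u ∈ El ∨ ι u < n) → dist yh (f u) = dist x u := by
      intro u hu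
      by_cases huEl : u ∈ El
      · rw [hf.fixes u huEl]
        rw [hS1 u (hsub huEl), hK2 u huEl, dist_comm]
      · rcases hu with h | h
        · exact absurd h huEl
        · exact hS2 u h huEl
    refine ⟨f', ?_, hold⟩
    refine ⟨?_, ?_, ?_, ?_, ?_⟩
    · intro z hz
      rw [hold z (Or.inl hz)]
      exact hf.fixes z hz
    · intro a b ha hb
      rcases hcase a ha with ha' | rfl <;> rcases hcase b hb with hb' | hb''
      · rw [hold a ha', hold b hb']
        exact hf.isom a b ha' hb'
      · subst hb''
        rw [hold a ha', hxval, dist_comm (f a) yh, hnew a ha', dist_comm]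
      · rw [hxval, hold b hb']
        exact hnew b hb'
      · subst hb''
        rw [hxval, dist_self, dist_self]
    · intro a ha haEl
      rcases hcase a ha with ha' | rfl
      · rw [hold a ha']
        exact hf.notEm a ha' haEl
      · rw [hxval]
        exact hS3
    · intro a ha i hai
      rcases hcase a ha with ha' | rfl
      · rw [hold a ha']
        exact hf.inOrb a ha' i hai
      · rw [hxval]
        constructor
        · rw [hdoms]
          exact hS3
        · intro z hz
          rw [hdoms] at hz
          rw [hS1 z hz]
          exact hK6 i hai z hz
    · intro a ha haEl i y hy z hz
      rcases hcase a ha with ha' | rfl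
      · rw [hold a ha']
        exact hf.compat a ha' haEl i y hy z hz
      · rw [hxval, hS1 z hz]
        exact (hK5 i y hy z hz).swap12


theorem statement15 (D : Set ℝ) (hD : IsUniversalDist D) (M : Type) [MetricSpace M]
    (hM : IsUrysohn D M) (El Em : Finset M) (hsub : El ⊆ Em) (s : ℕ)
    (t σ : Fin s → Katetov D M)
    (hdomt : ∀ i, (t i).dom = El) (hdoms : ∀ i, (σ i).dom = Em)
    (hext : ∀ i, ∀ x ∈ El, (σ i).f x = (t i).f x)
    (hd : ∀ i j, orbDistSet (t i) (t j) = orbDistSet (σ i) (σ j)) :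
    ∃ α : M → M, Isometry α ∧ (∀ x ∈ El, α x = x) ∧
      ∀ i, ∀ x ∈ orb (t i), α x ∈ orb (σ i) := by
  classical
  rcases Nat.eq_zero_or_pos s with hs0 | hs
  · subst hs0
    exact ⟨id, isometry_id, fun x _ => rfl, fun i => (Nat.not_lt_zero _ i.isLt).elim⟩
  rcases isEmpty_or_nonempty M with hE | hNe
  · exact ⟨id, isometry_id, fun x _ => rfl, fun i x hx => (IsEmpty.false x).elim⟩
  haveI : Countable M := hM.1
  obtain ⟨ι, hι⟩ := exists_injective_nat M
  have base : GoodMap El Em t σ ι 0 id := by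
    refine ⟨fun x _ => rfl, fun a b _ _ => rfl, ?_, ?_, ?_⟩
    · intro a ha haEl
      rcases ha with h | h
      · exact absurd h haEl
      · omega
    · intro a ha i hai
      have haEl : a ∉ El := by
        have := hai.1
        rwa [hdomt] at this
      rcases ha with h | h
      · exact absurd h haEl
      · omega
    · intro a ha haEl
      rcases ha with h | h
      · exact absurd h haEl
      · omega
  let Fc : (n : ℕ) → {g : M → M // GoodMap El Em t σ ι n g} := fun n =>
    Nat.rec ⟨id, base⟩ (fun m ih =>
      ⟨(key hD hM hsub hs hdomt hdoms hext hd hι m ih.1 ih.2).choose,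
       (key hD hM hsub hs hdomt hdoms hext hd hι m ih.1 ih.2).choose_spec.1⟩) n
  have hstep : ∀ m, ∀ y, (y ∈ El ∨ ι y < m) → (Fc (m + 1)).1 y = (Fc m).1 y :=
    fun m => (key hD hM hsub hs hdomt hdoms hext hd hι m (Fc m).1 (Fc m).2).choose_spec.2
  have hmono : ∀ m k, m ≤ k → ∀ y, (y ∈ El ∨ ι y < m) → (Fc k).1 y = (Fc m).1 y := by
    intro m k hmk
    induction k, hmk using Nat.le_induction with
    | base => intro y _; rfl
    | succ k hk ihk =>
        intro y hy
        have hy' : y ∈ El ∨ ι y < k := by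
          rcases hy with h | h
          · exact Or.inl h
          · exact Or.inr (lt_of_lt_of_le h hk)
        rw [hstep k y hy', ihk y hy]
  refine ⟨fun z => (Fc (ι z + 1)).1 z, ?_, ?_, ?_⟩
  · apply Isometry.of_dist_eq
    intro a b
    have hNa : ι a + 1 ≤ max (ι a + 1) (ι b + 1) := le_max_left _ _
    have hNb : ι b + 1 ≤ max (ι a + 1) (ι b + 1) := le_max_right _ _
    rw [show (Fc (ι a + 1)).1 a = (Fc (max (ι a + 1) (ι b + 1))).1 a from
        (hmono _ _ hNa a (Or.inr (Nat.lt_succ_self _))).symm,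
      show (Fc (ι b + 1)).1 b = (Fc (max (ι a + 1) (ι b + 1))).1 b from
        (hmono _ _ hNb b (Or.inr (Nat.lt_succ_self _))).symm]
    exact (Fc (max (ι a + 1) (ι b + 1))).2.isom a b
      (Or.inr (lt_of_lt_of_le (Nat.lt_succ_self _) hNa))
      (Or.inr (lt_of_lt_of_le (Nat.lt_succ_self _) hNb))
  · intro z hz
    exact (Fc (ι z + 1)).2.fixes z hz
  · intro i z hz
    exact (Fc (ι z + 1)).2.inOrb z (Or.inr (Nat.lt_succ_self _)) i hz

end Sauer
end

section
/- Let M be a countable Urysohn space with finite distance set D, and t ⊆ s two Katětov functions of M with rank(t) = rank(s). Then there exists an isometric embedding α of M into M fixing dom(t) pointwise with α(orb(t)) ⊆ orb(s). -/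
namespace Sauer

variable {D : Set ℝ} {M : Type} [MetricSpace M]

noncomputable def oplus (D : Set ℝ) (a b : ℝ) : ℝ := sSup {d | d ∈ D ∧ d ≤ a + b}

variable {D : Set ℝ}

lemma oplus_set_fin (hD : IsUniversalDist D) {a b : ℝ} :
    {d | d ∈ D ∧ d ≤ a + b}.Finite := hD.1.subset (fun d hd => hd.1)

lemma oplus_set_ne (hD : IsUniversalDist D) {a b : ℝ} (ha : 0 ≤ a) (hb : 0 ≤ b) :
    {d | d ∈ D ∧ d ≤ a + b}.Nonempty := ⟨0, hD.2.1, by linarith⟩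

lemma oplus_mem (hD : IsUniversalDist D) {a b : ℝ} (ha : 0 ≤ a) (hb : 0 ≤ b) :
    oplus D a b ∈ D ∧ oplus D a b ≤ a + b :=
  (oplus_set_ne hD ha hb).csSup_mem (oplus_set_fin hD)

lemma le_oplus (hD : IsUniversalDist D) {a b d : ℝ} (hd : d ∈ D) (hle : d ≤ a + b) :
    d ≤ oplus D a b := le_csSup (oplus_set_fin hD).bddAbove ⟨hd, hle⟩

lemma oplus_nonneg (hD : IsUniversalDist D) {a b : ℝ} (ha : 0 ≤ a) (hb : 0 ≤ b) :
    0 ≤ oplus D a b := le_oplus hD hD.2.1 (by linarith)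

lemma oplus_comm (D : Set ℝ) (a b : ℝ) : oplus D a b = oplus D b a := by
  unfold oplus; rw [add_comm]

lemma oplus_mono (hD : IsUniversalDist D) {a b b' : ℝ} (ha : 0 ≤ a) (hb : 0 ≤ b)
    (h : b ≤ b') : oplus D a b ≤ oplus D a b' :=
  csSup_le_csSup (oplus_set_fin hD).bddAbove
    ⟨0, hD.2.1, by linarith⟩ (fun d hd => ⟨hd.1, by linarith [hd.2]⟩)

lemma oplus_zero (hD : IsUniversalDist D) {a : ℝ} (ha : a ∈ D) (h0 : 0 ≤ a) :
    oplus D a 0 = a := by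
  apply le_antisymm
  · exact csSup_le (oplus_set_ne hD h0 le_rfl) (fun d hd => by linarith [hd.2])
  · exact le_oplus hD ha (by linarith)

lemma zero_oplus (hD : IsUniversalDist D) {a : ℝ} (ha : a ∈ D) (h0 : 0 ≤ a) :
    oplus D 0 a = a := by rw [oplus_comm]; exact oplus_zero hD ha h0

lemma self_le_oplus (hD : IsUniversalDist D) {a b : ℝ} (ha : a ∈ D) (hb : 0 ≤ b) :
    a ≤ oplus D a b := le_oplus hD ha (by linarith)

lemma oplus_assoc_le (hD : IsUniversalDist D) {a b c : ℝ} (haD : a ∈ D) (hbD : b ∈ D)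
    (hcD : c ∈ D) (ha : 0 < a) (hb : 0 < b) (hc : 0 < c) :
    oplus D a (oplus D b c) ≤ oplus D (oplus D a b) c := by
  set u := oplus D b c with hu
  obtain ⟨huD, hule⟩ := oplus_mem hD hb.le hc.le
  have hbu : b ≤ u := self_le_oplus hD hbD hc.le
  have hcu : c ≤ u := by rw [hu, oplus_comm]; exact self_le_oplus hD hcD hb.le
  set w := oplus D a u with hw
  obtain ⟨hwD, hwle⟩ := oplus_mem hD ha.le (hb.le.trans hbu)
  have haw : a ≤ w := self_le_oplus hD haD (hb.le.trans hbu)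
  have huw : u ≤ w := by rw [hw, oplus_comm]; exact self_le_oplus hD huD ha.le
  obtain ⟨p, hpD, hppos, ⟨h1, h2, h3⟩, ⟨h4, h5, h6⟩⟩ :=
    hD.2.2.2 u a w b c huD haD hwD hbD hcD ha (ha.trans_le haw) hb hc
      ⟨by linarith, by linarith, by linarith⟩ ⟨by linarith, by linarith, by linarith⟩
  have hpab : p ≤ oplus D a b := le_oplus hD hpD h3
  exact le_oplus hD hwD (by linarith)

lemma oplus_assoc (hD : IsUniversalDist D) {a b c : ℝ} (haD : a ∈ D) (hbD : b ∈ D)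
    (hcD : c ∈ D) (ha : 0 ≤ a) (hb : 0 ≤ b) (hc : 0 ≤ c) :
    oplus D a (oplus D b c) = oplus D (oplus D a b) c := by
  rcases ha.lt_or_eq with ha' | ha'
  · rcases hb.lt_or_eq with hb' | hb'
    · rcases hc.lt_or_eq with hc' | hc'
      · refine le_antisymm (oplus_assoc_le hD haD hbD hcD ha' hb' hc') ?_
        have := oplus_assoc_le hD hcD hbD haD hc' hb' ha'
        calc oplus D (oplus D a b) c = oplus D c (oplus D b a) := by
              rw [oplus_comm D a b, oplus_comm]
          _ ≤ oplus D (oplus D c b) a := this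
          _ = oplus D a (oplus D b c) := by rw [oplus_comm D c b, oplus_comm]
      · rw [← hc', oplus_zero hD hbD hb, oplus_zero hD (oplus_mem hD ha hb).1
          (oplus_nonneg hD ha hb)]
    · rw [← hb', zero_oplus hD hcD hc, oplus_zero hD haD ha]
  · rw [← ha', zero_oplus hD (oplus_mem hD hb hc).1 (oplus_nonneg hD hb hc),
      zero_oplus hD hbD hb]

variable {M : Type} [MetricSpace M]

/-- One-point extension of a D-valued Katětov function over an arbitrary subset. -/
lemma extend_one (hD : IsUniversalDist D) (hdist : ∀ x y : M, dist x y ∈ D)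
    (S : Set M) (hne : S.Nonempty) (g : M → ℝ)
    (hmem : ∀ z ∈ S, g z ∈ D) (hpos : ∀ z ∈ S, 0 < g z)
    (hp1 : ∀ z ∈ S, ∀ z' ∈ S, |g z - g z'| ≤ dist z z')
    (hp2 : ∀ z ∈ S, ∀ z' ∈ S, dist z z' ≤ g z + g z')
    (y : M) :
    ∃ c ∈ D, 0 < c ∧ ∀ z ∈ S, |g z - c| ≤ dist y z ∧ dist y z ≤ g z + c := by
  set T : Set ℝ := {d | ∃ z ∈ S, d = oplus D (g z) (dist y z)} with hT
  have hTD : T ⊆ D := by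
    rintro d ⟨z, hz, rfl⟩
    exact (oplus_mem hD (hpos z hz).le dist_nonneg).1
  have hTfin : T.Finite := hD.1.subset hTD
  have hTne : T.Nonempty := by
    obtain ⟨z, hz⟩ := hne; exact ⟨_, z, hz, rfl⟩
  set c := sInf T with hc
  obtain ⟨j, hj, hcj⟩ : ∃ z ∈ S, c = oplus D (g z) (dist y z) := hTne.csInf_mem hTfin
  have hcle : ∀ z ∈ S, c ≤ oplus D (g z) (dist y z) := fun z hz =>
    csInf_le hTfin.bddBelow ⟨z, hz, rfl⟩
  refine ⟨c, hTD (hcj ▸ ⟨j, hj, rfl⟩), ?_, ?_⟩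
  · calc (0:ℝ) < g j := hpos j hj
      _ ≤ oplus D (g j) (dist y j) := self_le_oplus hD (hmem j hj) dist_nonneg
      _ = c := hcj.symm
  · intro z hz
    have hgzD := hmem z hz
    have hgjD := hmem j hj
    have hgz := (hpos z hz).le
    have hgj := (hpos j hj).le
    have heyzD : dist y z ∈ D := hdist y z
    have heyjD : dist y j ∈ D := hdist y j
    have hezj : dist z j ≤ dist y z + dist y j := by
      rw [dist_comm y z]; exact dist_triangle z y j
    -- (1) c ≤ g z + dist y z
    have h1 : c ≤ g z + dist y z :=
      (hcle z hz).trans (oplus_mem hD hgz dist_nonneg).2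
    -- (2) g z ≤ dist y z + c
    have h2 : g z ≤ dist y z + c := by
      have ha : g z ≤ oplus D (g j) (dist z j) := by
        refine le_oplus hD hgzD ?_
        have := hp1 z hz j hj
        have := abs_le.1 this
        linarith [this.1]
      have hb : dist z j ≤ oplus D (dist y z) (dist y j) :=
        le_oplus hD (hdist z j) hezj
      have hcalc : oplus D (g j) (oplus D (dist y z) (dist y j))
          = oplus D (dist y z) c := by
        rw [hcj]
        rw [oplus_assoc hD hgjD heyzD heyjD hgj dist_nonneg dist_nonneg]
        rw [oplus_comm D (g j) (dist y z)]
        rw [← oplus_assoc hD heyzD hgjD heyjD dist_nonneg hgj dist_nonneg]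
      have : g z ≤ oplus D (dist y z) c := by
        calc g z ≤ oplus D (g j) (dist z j) := ha
          _ ≤ oplus D (g j) (oplus D (dist y z) (dist y j)) :=
            oplus_mono hD hgj dist_nonneg hb
          _ = oplus D (dist y z) c := hcalc
      have hcne : 0 ≤ c := by
        rw [hcj]; exact oplus_nonneg hD hgj dist_nonneg
      exact this.trans (oplus_mem hD dist_nonneg hcne).2
    -- (3) dist y z ≤ g z + c
    have h3 : dist y z ≤ g z + c := by
      have ha : dist y z ≤ oplus D (dist y j) (dist z j) := by
        refine le_oplus hD heyzD ?_
        have := dist_triangle y j z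
        rw [dist_comm j z] at this; linarith
      have hb : dist z j ≤ oplus D (g z) (g j) :=
        le_oplus hD (hdist z j) (hp2 z hz j hj)
      have hcalc : oplus D (dist y j) (oplus D (g z) (g j))
          = oplus D (g z) c := by
        rw [hcj]
        rw [oplus_assoc hD heyjD hgzD hgjD dist_nonneg hgz hgj]
        rw [oplus_comm D (dist y j) (g z)]
        rw [← oplus_assoc hD hgzD heyjD hgjD hgz dist_nonneg hgj]
        rw [oplus_comm D (dist y j) (g j), oplus_comm D (g j) (dist y j)]
      have : dist y z ≤ oplus D (g z) c := by
        calc dist y z ≤ oplus D (dist y j) (dist z j) := ha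
          _ ≤ oplus D (dist y j) (oplus D (g z) (g j)) :=
            oplus_mono hD dist_nonneg dist_nonneg hb
          _ = oplus D (g z) c := hcalc
      have hcne : 0 ≤ c := by
        rw [hcj]; exact oplus_nonneg hD hgj dist_nonneg
      exact this.trans (oplus_mem hD hgz hcne).2
    exact ⟨abs_le.2 ⟨by linarith, by linarith⟩, h3⟩

/-- Global D-valued Katětov extension via Zorn. -/
lemma extend_global (hD : IsUniversalDist D) (hdist : ∀ x y : M, dist x y ∈ D)
    (A : Set M) (hAne : A.Nonempty) (h : M → ℝ)
    (hmem : ∀ z ∈ A, h z ∈ D) (hpos : ∀ z ∈ A, 0 < h z)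
    (hp1 : ∀ z ∈ A, ∀ z' ∈ A, |h z - h z'| ≤ dist z z')
    (hp2 : ∀ z ∈ A, ∀ z' ∈ A, dist z z' ≤ h z + h z') :
    ∃ g : M → ℝ, (∀ z ∈ A, g z = h z) ∧ (∀ y : M, g y ∈ D) ∧ (∀ y : M, 0 < g y) ∧
      (∀ y y' : M, |g y - g y'| ≤ dist y y') ∧ (∀ y y' : M, dist y y' ≤ g y + g y') := by
  classical
  set Good : Set (Set (M × ℝ)) := {G |
    ({p : M × ℝ | p.1 ∈ A ∧ p.2 = h p.1} ⊆ G) ∧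
    (∀ p ∈ G, ∀ q ∈ G, Prod.fst p = Prod.fst q → Prod.snd p = Prod.snd q) ∧
    (∀ p ∈ G, Prod.snd p ∈ D ∧ 0 < Prod.snd p) ∧
    (∀ p ∈ G, ∀ q ∈ G, |Prod.snd p - Prod.snd q| ≤ dist p.1 q.1 ∧
      dist p.1 q.1 ≤ Prod.snd p + Prod.snd q)} with hGood
  have hG0 : {p : M × ℝ | p.1 ∈ A ∧ p.2 = h p.1} ∈ Good := by
    refine ⟨le_rfl, ?_, ?_, ?_⟩
    · rintro ⟨z, a⟩ ⟨hz, ha⟩ ⟨z', a'⟩ ⟨hz', ha'⟩ he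
      simp only at he ha ha' ⊢
      rw [ha, ha', he]
    · rintro ⟨z, a⟩ ⟨hz, ha⟩
      simp only at ha ⊢
      rw [ha]; exact ⟨hmem z hz, hpos z hz⟩
    · rintro ⟨z, a⟩ ⟨hz, ha⟩ ⟨z', a'⟩ ⟨hz', ha'⟩
      simp only at ha ha' ⊢
      rw [ha, ha']; exact ⟨hp1 z hz z' hz', hp2 z hz z' hz'⟩
  have chainub : ∀ c ⊆ Good, IsChain (fun x1 x2 => x1 ⊆ x2) c → c.Nonempty →
      ∃ ub ∈ Good, ∀ s ∈ c, s ⊆ ub := by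
    intro c hcS hchain hcne
    refine ⟨⋃₀ c, ?_, fun s hs => Set.subset_sUnion_of_mem hs⟩
    obtain ⟨s₀, hs₀⟩ := hcne
    have hmemc : ∀ p ∈ ⋃₀ c, ∀ q ∈ ⋃₀ c, ∃ s ∈ c, p ∈ s ∧ q ∈ s := by
      rintro p ⟨s, hs, hps⟩ q ⟨s', hs', hqs'⟩
      rcases hchain.total hs hs' with hss | hss
      · exact ⟨s', hs', hss hps, hqs'⟩
      · exact ⟨s, hs, hps, hss hqs'⟩
    refine ⟨(hcS hs₀).1.trans (Set.subset_sUnion_of_mem hs₀), ?_, ?_, ?_⟩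
    · intro p hp q hq he
      obtain ⟨s, hs, hps, hqs⟩ := hmemc p hp q hq
      exact (hcS hs).2.1 p hps q hqs he
    · rintro p ⟨s, hs, hps⟩; exact (hcS hs).2.2.1 p hps
    · intro p hp q hq
      obtain ⟨s, hs, hps, hqs⟩ := hmemc p hp q hq
      exact (hcS hs).2.2.2 p hps q hqs
  obtain ⟨G, hsubG, hGmax⟩ := zorn_subset_nonempty Good chainub _ hG0
  have hGmem := hGmax.prop
  -- G is total
  have htot : ∀ y : M, ∃ a, (y, a) ∈ G := by
    intro y
    by_contra hy
    push_neg at hy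
    set S : Set M := {z | ∃ a, (z, a) ∈ G} with hS
    have hyS : y ∉ S := fun ⟨a, ha⟩ => hy a ha
    have hSA : A ⊆ S := fun z hz => ⟨h z, hGmem.1 ⟨hz, rfl⟩⟩
    set gG : M → ℝ := fun z => if hz : ∃ a, (z, a) ∈ G then hz.choose else 0 with hgG
    have hgGmem : ∀ z ∈ S, (z, gG z) ∈ G := by
      intro z hz
      simp only [hgG]
      have hz' : ∃ a, (z, a) ∈ G := hz
      rw [dif_pos hz']
      exact hz'.choose_spec
    obtain ⟨c, hcD, hcpos, hcspec⟩ := extend_one hD hdist S (hAne.mono hSA) gG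
      (fun z hz => (hGmem.2.2.1 _ (hgGmem z hz)).1)
      (fun z hz => (hGmem.2.2.1 _ (hgGmem z hz)).2)
      (fun z hz z' hz' => (hGmem.2.2.2 _ (hgGmem z hz) _ (hgGmem z' hz')).1)
      (fun z hz z' hz' => (hGmem.2.2.2 _ (hgGmem z hz) _ (hgGmem z' hz')).2) y
    have hGy : insert (y, c) G ∈ Good := by
      refine ⟨fun p hp => Set.mem_insert_of_mem _ (hGmem.1 hp), ?_, ?_, ?_⟩
      · rintro p (rfl | hp) q (rfl | hq) he
        · rfl
        · exfalso
          apply hy q.2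
          have hq' : (q.1, q.2) ∈ G := hq
          rwa [← he] at hq'
        · exfalso
          apply hy p.2
          have hp' : (p.1, p.2) ∈ G := hp
          rwa [he] at hp' 
        · exact hGmem.2.1 p hp q hq he
      · rintro p (rfl | hp)
        · exact ⟨hcD, hcpos⟩
        · exact hGmem.2.2.1 p hp
      · have key : ∀ p ∈ G, |Prod.snd p - c| ≤ dist p.1 y ∧ dist p.1 y ≤ Prod.snd p + c := by
          intro p hp
          have hpS : p.1 ∈ S := ⟨p.2, by exact hp⟩
          have hval : gG p.1 = p.2 := hGmem.2.1 _ (hgGmem _ hpS) p hp rfl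
          have := hcspec p.1 hpS
          rw [hval, dist_comm y p.1] at this
          exact this
        rintro p (rfl | hp) q (rfl | hq)
        · refine ⟨by simp, ?_⟩
          simp only [dist_self]
          linarith
        · have := key q hq
          constructor
          · rw [abs_sub_comm, dist_comm]; exact this.1
          · rw [dist_comm]; linarith [this.2]
        · exact key p hp
        · exact hGmem.2.2.2 p hp q hq
    have : insert (y, c) G = G := hGmax.eq_of_subset hGy (Set.subset_insert _ _) |>.symm
    have : (y, c) ∈ G := this ▸ Set.mem_insert _ _
    exact hy c this
  set g : M → ℝ := fun y => (htot y).choose with hg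
  have hgmem : ∀ y, (y, g y) ∈ G := fun y => (htot y).choose_spec
  refine ⟨g, ?_, fun y => (hGmem.2.2.1 _ (hgmem y)).1, fun y => (hGmem.2.2.1 _ (hgmem y)).2,
    fun y y' => (hGmem.2.2.2 _ (hgmem y) _ (hgmem y')).1,
    fun y y' => (hGmem.2.2.2 _ (hgmem y) _ (hgmem y')).2⟩
  intro z hz
  exact hGmem.2.1 _ (hgmem z) (z, h z) (hGmem.1 ⟨hz, rfl⟩) rfl


lemma realize_s16 (hD : IsUniversalDist D) (hM : IsUrysohn D M)
    (B : Finset M) (κ : M → ℝ)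
    (hmem : ∀ x ∈ B, κ x ∈ D) (hpos : ∀ x ∈ B, 0 < κ x)
    (h1 : ∀ x ∈ B, ∀ y ∈ B, |κ x - κ y| ≤ dist x y)
    (h2 : ∀ x ∈ B, ∀ y ∈ B, dist x y ≤ κ x + κ y) :
    ∃ q : M, ∀ x ∈ B, dist q x = κ x := by
  classical
  set ι := {x // x ∈ B} with hι
  let dd : Option ι → Option ι → ℝ := fun p q =>
    p.elim (q.elim 0 (fun b => κ b)) (fun a => q.elim (κ a) (fun b => dist (a : M) (b : M)))
  have dds : ∀ a b : ι, dd (some a) (some b) = dist (a : M) (b : M) := fun _ _ => rfl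
  have ddn1 : ∀ a : ι, dd (some a) none = κ a := fun _ => rfl
  have ddn2 : ∀ b : ι, dd none (some b) = κ b := fun _ => rfl
  have ddnn : dd none none = 0 := rfl
  letI : MetricSpace (Option ι) :=
    { dist := dd
      dist_self := by
        rintro (_ | a)
        · rfl
        · exact dist_self (a : M)
      dist_comm := by
        rintro (_ | a) (_ | b)
        · rfl
        · rfl
        · rfl
        · exact dist_comm (a : M) (b : M)
      dist_triangle := by
        rintro (_ | a) (_ | b) (_ | c)
        · show (0:ℝ) ≤ 0 + 0
          norm_num
        · show κ (c : M) ≤ 0 + κ (c : M)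
          linarith
        · show (0:ℝ) ≤ κ (b : M) + κ (b : M)
          linarith [hpos (b : M) b.2]
        · show κ (c : M) ≤ κ (b : M) + dist (b : M) (c : M)
          linarith [(abs_le.1 (h1 (b : M) b.2 (c : M) c.2)).1]
        · show κ (a : M) ≤ κ (a : M) + 0
          linarith
        · show dist (a : M) (c : M) ≤ κ (a : M) + κ (c : M)
          exact h2 (a : M) a.2 (c : M) c.2
        · show κ (a : M) ≤ dist (a : M) (b : M) + κ (b : M)
          linarith [(abs_le.1 (h1 (a : M) a.2 (b : M) b.2)).2]
        · exact dist_triangle (a : M) (b : M) (c : M)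
      eq_of_dist_eq_zero := by
        rintro (_ | a) (_ | b) hd
        · rfl
        · exact absurd (hd : κ (b : M) = 0) (ne_of_gt (hpos (b : M) b.2))
        · exact absurd (hd : κ (a : M) = 0) (ne_of_gt (hpos (a : M) a.2))
        · exact congrArg some (Subtype.ext (dist_eq_zero.1 (hd : dist (a : M) (b : M) = 0)))
      edist_dist := fun x y => rfl }
  have hdist' : ∀ x y : Option ι, dist x y = dd x y := fun _ _ => rfl
  have hfin : Finite (Option ι) := by
    have : Finite ι := FinsetCoe.fintype B |>.finite
    infer_instance
  have hDN : ∀ x y : Option ι, dist x y ∈ D := by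
    rintro (_ | a) (_ | b)
    · exact hD.2.1
    · exact hmem b b.2
    · exact hmem a a.2
    · exact hM.2.1 (a : M) (b : M)
  obtain ⟨f, hf⟩ := hM.2.2.2 (Option ι) hfin hDN
  set gg : ι → M := fun b => f (some b) with hgg
  have hgd : ∀ b b' : ι, dist (gg b) (gg b') = dist (b : M) (b' : M) := by
    intro b b'
    rw [hf.dist_eq, hdist', dds]
  have hginj : Function.Injective gg := by
    intro b b' he
    have h0 : dist (b : M) (b' : M) = 0 := by rw [← hgd, he, dist_self]
    exact Subtype.ext (dist_eq_zero.1 h0)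
  set φ : M → M := Function.extend gg (fun b => (b : M)) id with hφ
  have hφg : ∀ b : ι, φ (gg b) = (b : M) := fun b => hginj.extend_apply _ _ _
  set A' : Finset M := B.attach.image gg with hA'
  have hiso : ∀ x ∈ A', ∀ y ∈ A', dist (φ x) (φ y) = dist x y := by
    intro x hx y hy
    obtain ⟨b, _, rfl⟩ := Finset.mem_image.1 hx
    obtain ⟨b', _, rfl⟩ := Finset.mem_image.1 hy
    rw [hφg, hφg, hgd]
  obtain ⟨ψ, hψ⟩ := hM.2.2.1 A' φ hiso
  refine ⟨ψ (f none), ?_⟩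
  intro x hx
  have hxA : gg ⟨x, hx⟩ ∈ A' := Finset.mem_image.2 ⟨⟨x, hx⟩, Finset.mem_attach _ _, rfl⟩
  have hfix : ψ (gg ⟨x, hx⟩) = x := by rw [hψ _ hxA, hφg]
  calc dist (ψ (f none)) x = dist (ψ (f none)) (ψ (gg ⟨x, hx⟩)) := by rw [hfix]
    _ = dist (f none) (gg ⟨x, hx⟩) := ψ.dist_eq _ _
    _ = dist (none : Option ι) (some ⟨x, hx⟩) := hf.dist_eq _ _
    _ = κ x := by rw [hdist', ddn2]

noncomputable def seqBuild {M : Type} (step : (n : ℕ) → ((k : ℕ) → k < n → M) → M) : ℕ → M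
  | n => step n (fun k _ => seqBuild step k)
  decreasing_by assumption

lemma seqBuild_eq {M : Type} (step : (n : ℕ) → ((k : ℕ) → k < n → M) → M) (n : ℕ) :
    seqBuild step n = step n (fun k _ => seqBuild step k) := by
  rw [seqBuild]

lemma step_embed (hD : IsUniversalDist D) (hM : IsUrysohn D M)
    (t t' : Katetov D M) (v : M) (hv : v ∉ t.dom)
    (hdom : ∀ x : M, x ∈ t'.dom ↔ x = v ∨ x ∈ t.dom)
    (hfe : ∀ x ∈ t.dom, t'.f x = t.f x) (hrk : rank t' = rank t) (hne : t.dom.Nonempty) :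
    ∃ α : M → M, Isometry α ∧ (∀ x ∈ t.dom, α x = x) ∧ ∀ y ∈ orb t, α y ∈ orb t' := by
  classical
  have hvd : v ∈ t'.dom := (hdom v).2 (Or.inl rfl)
  set s := t'.f v with hs
  have hsD : s ∈ D := t'.mem v hvd
  have hspos : 0 < s := t'.pos v hvd
  have hdsub : ∀ x ∈ t.dom, x ∈ t'.dom := fun x hx => (hdom x).2 (Or.inr hx)
  -- rank facts
  have himgfin : (t.f '' ↑t.dom).Finite := t.dom.finite_toSet.image _
  have himgne : (t.f '' ↑t.dom).Nonempty := (hne.to_set).image _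
  obtain ⟨x₀, hx₀mem, hx₀⟩ : ∃ x₀ ∈ (↑t.dom : Set M), t.f x₀ = rank t := by
    obtain ⟨x₀, hmem, hval⟩ := himgne.csInf_mem himgfin
    exact ⟨x₀, hmem, hval⟩
  have hx₀d : x₀ ∈ t.dom := hx₀mem
  have hrs : rank t ≤ s := by
    rw [← hrk]
    exact csInf_le (t'.dom.finite_toSet.image _).bddBelow ⟨v, hvd, rfl⟩
  -- cross inequalities between s and t.f
  have cross1 : ∀ x ∈ t.dom, |s - dist x v| ≤ t.f x := by
    intro x hx
    have e1 := t'.ineq1 v hvd x (hdsub x hx)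
    have e2 := t'.ineq2 v hvd x (hdsub x hx)
    rw [hfe x hx] at e1 e2
    rw [abs_le] at e1 ⊢
    rw [dist_comm v x] at e1 e2
    constructor
    · linarith [e2]
    · linarith [e1.1]
  have cross2 : ∀ x ∈ t.dom, t.f x ≤ s + dist x v := by
    intro x hx
    have e1 := t'.ineq1 v hvd x (hdsub x hx)
    rw [hfe x hx, abs_le, dist_comm v x] at e1
    linarith [e1.2]
  -- the partial function h on A
  set A : Set M := ↑t.dom ∪ orb t with hA
  set h : M → ℝ := fun z => if z ∈ t.dom then dist z v else s with hh
  have hAne : A.Nonempty := ⟨x₀, Or.inl hx₀mem⟩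
  have hhdom : ∀ z ∈ t.dom, h z = dist z v := fun z hz => if_pos hz
  have hhorb : ∀ z ∈ orb t, h z = s := fun z hz => if_neg hz.1
  have horbd : ∀ z ∈ orb t, ∀ x ∈ t.dom, dist z x = t.f x := fun z hz => hz.2
  have hcase : ∀ z ∈ A, z ∈ t.dom ∨ z ∈ orb t := by
    intro z hz
    rcases hz with hz | hz
    · exact Or.inl hz
    · exact Or.inr hz
  have hp1 : ∀ z ∈ A, ∀ z' ∈ A, |h z - h z'| ≤ dist z z' := by
    intro z hz z' hz'
    rcases hcase z hz with h1 | h1 <;> rcases hcase z' hz' with h2 | h2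
    · rw [hhdom z h1, hhdom z' h2]
      have := abs_dist_sub_le z z' v
      exact this
    · rw [hhdom z h1, hhorb z' h2, abs_sub_comm]
      have := cross1 z h1
      rw [dist_comm z z', horbd z' h2 z h1]
      exact this
    · rw [hhorb z h1, hhdom z' h2]
      have := cross1 z' h2
      rw [horbd z h1 z' h2]
      exact this
    · rw [hhorb z h1, hhorb z' h2, sub_self, abs_zero]
      exact dist_nonneg
  have hp2 : ∀ z ∈ A, ∀ z' ∈ A, dist z z' ≤ h z + h z' := by
    intro z hz z' hz'
    rcases hcase z hz with h1 | h1 <;> rcases hcase z' hz' with h2 | h2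
    · rw [hhdom z h1, hhdom z' h2]
      calc dist z z' ≤ dist z v + dist v z' := dist_triangle _ _ _
        _ = dist z v + dist z' v := by rw [dist_comm v z']
    · rw [hhdom z h1, hhorb z' h2]
      have := cross2 z h1
      rw [dist_comm z z', horbd z' h2 z h1]
      linarith
    · rw [hhorb z h1, hhdom z' h2]
      have := cross2 z' h2
      rw [horbd z h1 z' h2]
      linarith
    · rw [hhorb z h1, hhorb z' h2]
      calc dist z z' ≤ dist z x₀ + dist x₀ z' := dist_triangle _ _ _
        _ = t.f x₀ + t.f x₀ := by
            rw [horbd z h1 x₀ hx₀d, dist_comm x₀ z', horbd z' h2 x₀ hx₀d]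
        _ ≤ s + s := by rw [hx₀]; linarith [hrs]
  have hmemA : ∀ z ∈ A, h z ∈ D := by
    intro z hz
    rcases hcase z hz with h1 | h1
    · rw [hhdom z h1]; exact hM.2.1 z v
    · rw [hhorb z h1]; exact hsD
  have hposA : ∀ z ∈ A, 0 < h z := by
    intro z hz
    rcases hcase z hz with h1 | h1
    · rw [hhdom z h1]
      exact dist_pos.2 (fun he => hv (he ▸ h1))
    · rw [hhorb z h1]; exact hspos
  obtain ⟨g, hgA, hgD, hgpos, hg1, hg2⟩ :=
    extend_global hD hM.2.1 A hAne h hmemA hposA hp1 hp2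
  have hgdom : ∀ z ∈ t.dom, g z = dist z v := by
    intro z hz; rw [hgA z (Or.inl hz), hhdom z hz]
  have hgorb : ∀ z ∈ orb t, g z = s := by
    intro z hz; rw [hgA z (Or.inr hz), hhorb z hz]
  -- enumeration of M, t.dom first
  haveI : Nonempty M := ⟨v⟩
  haveI : Countable M := hM.1
  obtain ⟨e₀, he₀⟩ := exists_surjective_nat M
  set xs := t.dom.toList with hxs
  set d := xs.length with hd
  set e : ℕ → M := fun n => if hn : n < d then xs.get ⟨n, hn⟩ else e₀ (n - d) with he
  have he_surj : ∀ y : M, ∃ n, e n = y := by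
    intro y
    obtain ⟨m, rfl⟩ := he₀ y
    refine ⟨m + d, ?_⟩
    simp only [he]
    rw [dif_neg (by omega)]
    congr 1
    omega
  have he_dom1 : ∀ k, k < d → e k ∈ t.dom := by
    intro k hk
    simp only [he]
    rw [dif_pos hk]
    exact Finset.mem_toList.1 (xs.get_mem _)
  have he_dom2 : ∀ x ∈ t.dom, ∃ k, k < d ∧ e k = x := by
    intro x hx
    have : x ∈ xs := Finset.mem_toList.2 hx
    obtain ⟨i, hi⟩ := List.mem_iff_get.1 this
    refine ⟨i, i.isLt, ?_⟩
    simp only [he]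
    rw [dif_pos i.isLt]
    exact hi
  have he_dom3 : ∀ k, e k ∈ t.dom → k < d ∨ ∃ j, j < d ∧ e j = e k := by
    intro k hk
    exact Or.inr (he_dom2 _ hk)
  -- the recursive construction
  set step : (n : ℕ) → ((k : ℕ) → k < n → M) → M := fun n prev =>
    if e n ∈ t.dom then e n else
      Classical.epsilon (fun q => dist q v = g (e n) ∧
        ∀ k, ∀ hk : k < n, dist q (prev k hk) = dist (e n) (e k)) with hstep
  set F : ℕ → M := seqBuild step with hF
  have Feq : ∀ n, F n = step n (fun k _ => F k) := fun n => seqBuild_eq step n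
  set I : ℕ → Prop := fun n => (e n ∈ t.dom → F n = e n) ∧ dist (F n) v = g (e n) ∧
    ∀ k, k < n → dist (F n) (F k) = dist (e n) (e k) with hI
  have inv : ∀ n, I n := by
    intro n
    induction n using Nat.strong_induction_on with
    | _ n ih =>
      by_cases hdn : e n ∈ t.dom
      · have hFn : F n = e n := by rw [Feq n]; simp only [hstep]; rw [if_pos hdn]
        refine ⟨fun _ => hFn, ?_, ?_⟩
        · rw [hFn, hgdom _ hdn]
        · intro k hk
          rw [hFn]
          by_cases hdk : e k ∈ t.dom
          · rw [(ih k hk).1 hdk]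
          · -- e n appears at some index j < d ≤ k
            obtain ⟨j, hjd, hje⟩ := he_dom2 _ hdn
            have hkd : ¬ k < d := fun hkd => hdk (he_dom1 k hkd)
            have hjk : j < k := lt_of_lt_of_le hjd (le_of_not_gt hkd)
            have hFj : F j = e j := (ih j (hjk.trans hk)).1 (hje ▸ hdn)
            have := (ih k hk).2.2 j hjk
            rw [hFj, hje] at this
            rw [dist_comm (e n) (F k), this, dist_comm (e k) (e n)]
      · -- existence of a good point
        have hex : ∃ q : M, dist q v = g (e n) ∧
            ∀ k, ∀ hk : k < n, dist q (F k) = dist (e n) (e k) := by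
          by_cases hdup : ∃ k, k < n ∧ e k = e n
          · obtain ⟨k₀, hk₀n, hk₀e⟩ := hdup
            refine ⟨F k₀, ?_, ?_⟩
            · rw [(ih k₀ hk₀n).2.1, hk₀e]
            · intro k hk
              rcases lt_trichotomy k k₀ with hlt | heq | hgt
              · rw [(ih k₀ hk₀n).2.2 k hlt, hk₀e]
              · subst heq
                rw [dist_self, ← hk₀e, dist_self]
              · rw [dist_comm (F k₀) (F k), (ih k hk).2.2 k₀ hgt, hk₀e,
                  dist_comm (e k) (e n)]
          · push_neg at hdup
            -- fresh point: use realize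
            set B : Finset M := insert v ((Finset.range n).image (fun k => F k)) with hB
            have hFne : ∀ k, k < n → e k ≠ e n := fun k hk => hdup k hk
            have hFv : ∀ k, k < n → F k ≠ v := by
              intro k hk hcon
              have := (ih k hk).2.1
              rw [hcon, dist_self] at this
              exact absurd this.symm (ne_of_gt (hgpos (e k)))
            have hFF : ∀ k, k < n → ∀ j, j < n → F k = F j → e k = e j := by
              intro k hk j hj hcon
              rcases lt_trichotomy k j with hlt | heq | hgt
              · have := (ih j hj).2.2 k hlt
                rw [hcon, dist_self] at this
                exact (dist_eq_zero.1 this.symm).symm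
              · rw [heq]
              · have := (ih k hk).2.2 j hgt
                rw [hcon, dist_self] at this
                exact dist_eq_zero.1 this.symm
            set κ : M → ℝ := fun z =>
              if hz : ∃ k, k < n ∧ F k = z then
                dist (e n) (e hz.choose) else g (e n) with hκ
            have hκv : κ v = g (e n) := by
              simp only [hκ]
              rw [dif_neg]
              rintro ⟨k, hk, hcon⟩
              exact hFv k hk hcon
            have hκF : ∀ k, k < n → κ (F k) = dist (e n) (e k) := by
              intro k hk
              have hex' : ∃ k', k' < n ∧ F k' = F k := ⟨k, hk, rfl⟩
              simp only [hκ]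
              rw [dif_pos hex']
              have hspec := hex'.choose_spec
              rw [hFF _ hspec.1 _ hk hspec.2]
            have hmemB : ∀ x ∈ B, x = v ∨ ∃ k, k < n ∧ F k = x := by
              intro x hx
              rcases Finset.mem_insert.1 hx with hx | hx
              · exact Or.inl hx
              · obtain ⟨k, hk, rfl⟩ := Finset.mem_image.1 hx
                exact Or.inr ⟨k, Finset.mem_range.1 hk, rfl⟩
            -- distances involving anchors
            have hdv : ∀ k, k < n → dist v (F k) = g (e k) := by
              intro k hk
              rw [dist_comm]
              exact (ih k hk).2.1
            have hdFF : ∀ k, k < n → ∀ j, j < n → dist (F k) (F j) = dist (e k) (e j) := by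
              intro k hk j hj
              rcases lt_trichotomy k j with hlt | heq | hgt
              · rw [dist_comm (F k) (F j), (ih j hj).2.2 k hlt, dist_comm]
              · subst heq; rw [dist_self, dist_self]
              · exact (ih k hk).2.2 j hgt
            have hκmem : ∀ x ∈ B, κ x ∈ D := by
              intro x hx
              rcases hmemB x hx with rfl | ⟨k, hk, rfl⟩
              · rw [hκv]; exact hgD (e n)
              · rw [hκF k hk]; exact hM.2.1 _ _
            have hκpos : ∀ x ∈ B, 0 < κ x := by
              intro x hx
              rcases hmemB x hx with rfl | ⟨k, hk, rfl⟩
              · rw [hκv]; exact hgpos (e n)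
              · rw [hκF k hk]
                exact dist_pos.2 (Ne.symm (hFne k hk))
            have hκ1 : ∀ x ∈ B, ∀ y ∈ B, |κ x - κ y| ≤ dist x y := by
              intro x hx y hy
              rcases hmemB x hx with rfl | ⟨k, hk, rfl⟩ <;>
                rcases hmemB y hy with hy' | ⟨j, hj, hy'⟩
              · subst hy'
                rw [sub_self, abs_zero, dist_self]
              · subst hy'
                rw [hκv, hκF j hj, hdv j hj, abs_le]
                have a1 := hg1 (e n) (e j)
                have a2 := hg2 (e n) (e j)
                rw [abs_le] at a1
                constructor
                · linarith [a2]
                · linarith [a1.1]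
              · subst hy'
                rw [hκv, hκF k hk, dist_comm (F k) y, hdv k hk, abs_le]
                have a1 := hg1 (e n) (e k)
                have a2 := hg2 (e n) (e k)
                rw [abs_le] at a1
                constructor
                · linarith [a1.1]
                · linarith [a2]
              · subst hy'
                rw [hκF k hk, hκF j hj, hdFF k hk j hj]
                calc |dist (e n) (e k) - dist (e n) (e j)|
                    = |dist (e k) (e n) - dist (e j) (e n)| := by
                      rw [dist_comm (e n) (e k), dist_comm (e n) (e j)]
                  _ ≤ dist (e k) (e j) := abs_dist_sub_le _ _ _
            have hκ2 : ∀ x ∈ B, ∀ y ∈ B, dist x y ≤ κ x + κ y := by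
              intro x hx y hy
              rcases hmemB x hx with rfl | ⟨k, hk, rfl⟩ <;>
                rcases hmemB y hy with hy' | ⟨j, hj, hy'⟩
              · subst hy'
                rw [dist_self, hκv]
                linarith [hgpos (e n)]
              · subst hy'
                rw [hκv, hκF j hj, hdv j hj]
                have a1 := hg1 (e j) (e n)
                rw [abs_le] at a1
                rw [dist_comm (e n) (e j)]
                linarith [a1.2]
              · subst hy'
                rw [hκv, hκF k hk, dist_comm (F k) y, hdv k hk]
                have a1 := hg1 (e k) (e n)
                rw [abs_le] at a1
                rw [dist_comm (e n) (e k)]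
                linarith [a1.2]
              · subst hy'
                rw [hκF k hk, hκF j hj, hdFF k hk j hj]
                calc dist (e k) (e j) ≤ dist (e k) (e n) + dist (e n) (e j) :=
                      dist_triangle _ _ _
                  _ = dist (e n) (e k) + dist (e n) (e j) := by rw [dist_comm (e k) (e n)]
            obtain ⟨q, hq⟩ := realize_s16 hD hM B κ hκmem hκpos hκ1 hκ2
            refine ⟨q, ?_, ?_⟩
            · rw [hq v (Finset.mem_insert_self _ _), hκv]
            · intro k hk
              have hFkB : F k ∈ B := Finset.mem_insert_of_mem
                (Finset.mem_image.2 ⟨k, Finset.mem_range.2 hk, rfl⟩)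
              rw [hq _ hFkB, hκF k hk]
        have hFn : F n = Classical.epsilon (fun q => dist q v = g (e n) ∧
            ∀ k, ∀ hk : k < n, dist q (F k) = dist (e n) (e k)) := by
          rw [Feq n]; simp only [hstep]; rw [if_neg hdn]
        have hspec := Classical.epsilon_spec hex
        rw [← hFn] at hspec
        exact ⟨fun hcon => absurd hcon hdn, hspec.1, fun k hk => hspec.2 k hk⟩
  -- define α
  set idx : M → ℕ := fun y => (he_surj y).choose with hidx
  have hidxe : ∀ y, e (idx y) = y := fun y => (he_surj y).choose_spec
  set α : M → M := fun y => F (idx y) with hα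
  have hdFF : ∀ k j, dist (F k) (F j) = dist (e k) (e j) := by
    intro k j
    rcases lt_trichotomy k j with hlt | heq | hgt
    · rw [dist_comm (F k) (F j), (inv j).2.2 k hlt, dist_comm]
    · subst heq; rw [dist_self, dist_self]
    · exact (inv k).2.2 j hgt
  have hαdist : ∀ y y' : M, dist (α y) (α y') = dist y y' := by
    intro y y'
    simp only [hα]
    rw [hdFF, hidxe, hidxe]
  have hαfix : ∀ x ∈ t.dom, α x = x := by
    intro x hx
    simp only [hα]
    have : e (idx x) ∈ t.dom := by rw [hidxe]; exact hx
    rw [(inv (idx x)).1 this, hidxe]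
  have hαv : ∀ y : M, dist (α y) v = g y := by
    intro y
    simp only [hα]
    rw [(inv (idx y)).2.1, hidxe]
  refine ⟨α, Isometry.of_dist_eq hαdist, hαfix, ?_⟩
  intro y hy
  have hdv : dist (α y) v = s := by rw [hαv y, hgorb y hy]
  have hdx : ∀ x ∈ t.dom, dist (α y) x = t.f x := by
    intro x hx
    have := hαdist y x
    rw [hαfix x hx] at this
    rw [this]
    exact hy.2 x hx
  constructor
  · -- α y ∉ t'.dom
    intro hcon
    rcases (hdom _).1 hcon with hcon | hcon
    · rw [hcon, dist_self] at hdv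
      exact absurd hdv.symm (ne_of_gt hspos)
    · have := hdx _ hcon
      rw [dist_self] at this
      exact absurd this.symm (ne_of_gt (t.pos _ hcon))
  · intro x hx
    rcases (hdom x).1 hx with rfl | hx
    · rw [hdv, hs]
    · rw [hdx x hx, hfe x hx]

theorem statement16 (D : Set ℝ) (hD : IsUniversalDist D) (M : Type) [MetricSpace M]
    (hM : IsUrysohn D M) (t σ : Katetov D M) (hsub : t.dom ⊆ σ.dom)
    (hext : ∀ x ∈ t.dom, σ.f x = t.f x) (hrank : rank t = rank σ) :
    ∃ α : M → M, Isometry α ∧ (∀ x ∈ t.dom, α x = x) ∧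
      ∀ x ∈ orb t, α x ∈ orb σ := by
  classical
  by_cases hσe : σ.dom = ∅
  · refine ⟨id, isometry_id, fun x _ => rfl, ?_⟩
    intro x _
    refine ⟨by rw [hσe]; exact Finset.notMem_empty x, ?_⟩
    intro z hz
    rw [hσe] at hz
    exact absurd hz (Finset.notMem_empty z)
  · have hσne : σ.dom.Nonempty := Finset.nonempty_iff_ne_empty.2 hσe
    have htne : t.dom.Nonempty := by
      by_contra hte
      rw [Finset.not_nonempty_iff_eq_empty] at hte
      have h1 : rank t = 0 := by
        rw [rank, hte]
        simp [Real.sInf_empty]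
      have himgfin : (σ.f '' ↑σ.dom).Finite := σ.dom.finite_toSet.image _
      have himgne : (σ.f '' ↑σ.dom).Nonempty := hσne.to_set.image _
      obtain ⟨x₀, hx₀mem, hx₀⟩ := himgne.csInf_mem himgfin
      have h2 : 0 < rank σ := by
        rw [rank, ← hx₀]
        exact σ.pos x₀ hx₀mem
      rw [h1] at hrank
      exact absurd hrank.symm (ne_of_gt h2)
    have main : ∀ n : ℕ, ∀ t : Katetov D M, t.dom ⊆ σ.dom →
        (∀ x ∈ t.dom, σ.f x = t.f x) → rank t = rank σ → t.dom.Nonempty →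
        (σ.dom \ t.dom).card = n →
        ∃ α : M → M, Isometry α ∧ (∀ x ∈ t.dom, α x = x) ∧
          ∀ x ∈ orb t, α x ∈ orb σ := by
      intro n
      induction n with
      | zero =>
        intro t hsub hext hrank htne hcard
        rw [Finset.card_eq_zero] at hcard
        have hdeq : t.dom = σ.dom := by
          refine Finset.Subset.antisymm hsub ?_
          intro x hx
          by_contra hxt
          have : x ∈ σ.dom \ t.dom := Finset.mem_sdiff.2 ⟨hx, hxt⟩
          rw [hcard] at this
          exact absurd this (Finset.notMem_empty x)
        refine ⟨id, isometry_id, fun x _ => rfl, ?_⟩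
        intro y hy
        refine ⟨by rw [← hdeq]; exact hy.1, ?_⟩
        intro x hx
        have hx' : x ∈ t.dom := hdeq ▸ hx
        show dist y x = σ.f x
        rw [hy.2 x hx']
        exact (hext x hx').symm
      | succ n ihn =>
        intro t hsub hext hrank htne hcard
        have hvne : (σ.dom \ t.dom).Nonempty := Finset.card_pos.1 (by omega)
        obtain ⟨v, hv⟩ := hvne
        have hvσ : v ∈ σ.dom := (Finset.mem_sdiff.1 hv).1
        have hvt : v ∉ t.dom := (Finset.mem_sdiff.1 hv).2
        have hsubt' : ∀ x ∈ insert v t.dom, x ∈ σ.dom := by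
          intro x hx
          rcases Finset.mem_insert.1 hx with rfl | hx
          · exact hvσ
          · exact hsub hx
        set t' : Katetov D M :=
          { dom := insert v t.dom
            f := σ.f
            mem := fun x hx => σ.mem x (hsubt' x hx)
            pos := fun x hx => σ.pos x (hsubt' x hx)
            ineq1 := fun x hx y hy => σ.ineq1 x (hsubt' x hx) y (hsubt' y hy)
            ineq2 := fun x hx y hy => σ.ineq2 x (hsubt' x hx) y (hsubt' y hy) } with ht'
        have ht'dom : t'.dom = insert v t.dom := rfl
        have ht'f : t'.f = σ.f := rfl
        have himgsub1 : t'.f '' ↑t'.dom ⊆ σ.f '' ↑σ.dom := by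
          rintro z ⟨x, hx, rfl⟩
          exact ⟨x, hsubt' x hx, rfl⟩
        have himgsub2 : t.f '' ↑t.dom ⊆ t'.f '' ↑t'.dom := by
          rintro z ⟨x, hx, rfl⟩
          refine ⟨x, Finset.mem_insert_of_mem hx, ?_⟩
          exact hext x hx
        have hrk1 : rank σ ≤ rank t' :=
          csInf_le_csInf (σ.dom.finite_toSet.image _).bddBelow
            (⟨σ.f v, v, Finset.mem_insert_self _ _, rfl⟩) himgsub1
        have hrk2 : rank t' ≤ rank t :=
          csInf_le_csInf (t'.dom.finite_toSet.image _).bddBelow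
            (htne.to_set.image _) himgsub2
        have hrt' : rank t' = rank t := le_antisymm hrk2 (hrank ▸ hrk1)
        obtain ⟨α₁, hα₁iso, hα₁fix, hα₁orb⟩ := step_embed hD hM t t' v hvt
          (fun x => by rw [ht'dom]; exact Finset.mem_insert)
          (fun x hx => hext x hx) hrt' htne
        have hcard' : (σ.dom \ t'.dom).card = n := by
          rw [ht'dom, Finset.sdiff_insert, Finset.card_erase_of_mem hv, hcard]
          omega
        obtain ⟨α₂, hα₂iso, hα₂fix, hα₂orb⟩ := ihn t' (fun x hx => hsubt' x hx)
          (fun x _ => rfl) (hrt'.trans hrank) ⟨v, Finset.mem_insert_self _ _⟩ hcard'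
        refine ⟨α₂ ∘ α₁, hα₂iso.comp hα₁iso, ?_, ?_⟩
        · intro x hx
          show α₂ (α₁ x) = x
          rw [hα₁fix x hx]
          exact hα₂fix x (Finset.mem_insert_of_mem hx)
        · intro y hy
          exact hα₂orb _ (hα₁orb y hy)
    exact main (σ.dom \ t.dom).card t hsub hext hrank htne rfl

end Sauer
end
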